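/- arXiv:1406.1563 — 9 statements merged into one kernel-verified Lean document; each statement's English description precedes it below -/
import Mathlib

section
/- Let com⁺ denote the transitive closure of com. Then com⁺ = com ∪ (co;rf) ∪ (fr;rf), i.e., for all events x and y, com⁺ x y holds if and only if com x y, or there exists p with co x p and rf p y, or there exists p with fr x p and rf p y. -/
theorem com_plus_characterization {E A : Type*} (W Rd : E → Prop) (addr : E → A)
    (co rf fr com : E → E → Prop)
    (hdisj : ∀ e, ¬ (W e ∧ Rd e))
    (hco_irr : ∀ x, ¬ co x x)
    (hco_trans : ∀ x y z, co x y → co y z → co x z)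
    (hco_wf : ∀ x y, co x y → W x ∧ W y ∧ addr x = addr y)
    (hco_total : ∀ x y, W x → W y → addr x = addr y → co x y ∨ x = y ∨ co y x)
    (hrf_wf : ∀ w r, rf w r → W w ∧ Rd r ∧ addr w = addr r)
    (hrf_ex : ∀ r, Rd r → ∃! w, rf w r)
    (hfr : ∀ r w, fr r w ↔ ∃ w', rf w' r ∧ co w' w)
    (hcom : ∀ x y, com x y ↔ co x y ∨ rf x y ∨ fr x y) :
    ∀ x y, Relation.TransGen com x y ↔ (com x y ∨ (∃ p, co x p ∧ rf p y) ∨ (∃ p, fr x p ∧ rf p y)) := by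
  intro x y
  constructor
  · intro h
    induction h with
    | single h => exact Or.inl h
    | tail _ hstep ih =>
      rename_i b c _
      rcases (hcom _ _).mp hstep with hco | hrf | hfrbc
      · -- co b c : b is a write
        rcases ih with hxb | ⟨p, hcp, hrf'⟩ | ⟨p, hfp, hrf'⟩
        · rcases (hcom _ _).mp hxb with h1 | h2 | h3
          · exact Or.inl ((hcom _ _).mpr (Or.inl (hco_trans _ _ _ h1 hco)))
          · exact absurd ⟨(hco_wf _ _ hco).1, (hrf_wf _ _ h2).2.1⟩ (hdisj b)
          · obtain ⟨w', hw1, hw2⟩ := (hfr _ _).mp h3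
            exact Or.inl ((hcom _ _).mpr (Or.inr (Or.inr ((hfr _ _).mpr
              ⟨w', hw1, hco_trans _ _ _ hw2 hco⟩))))
        · exact absurd ⟨(hco_wf _ _ hco).1, (hrf_wf _ _ hrf').2.1⟩ (hdisj b)
        · exact absurd ⟨(hco_wf _ _ hco).1, (hrf_wf _ _ hrf').2.1⟩ (hdisj b)
      · -- rf b c : b is a write
        rcases ih with hxb | ⟨p, hcp, hrf'⟩ | ⟨p, hfp, hrf'⟩
        · rcases (hcom _ _).mp hxb with h1 | h2 | h3
          · exact Or.inr (Or.inl ⟨b, h1, hrf⟩)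
          · exact absurd ⟨(hrf_wf _ _ hrf).1, (hrf_wf _ _ h2).2.1⟩ (hdisj b)
          · exact Or.inr (Or.inr ⟨b, h3, hrf⟩)
        · exact absurd ⟨(hrf_wf _ _ hrf).1, (hrf_wf _ _ hrf').2.1⟩ (hdisj b)
        · exact absurd ⟨(hrf_wf _ _ hrf).1, (hrf_wf _ _ hrf').2.1⟩ (hdisj b)
      · -- fr b c : ∃ w'', rf w'' b ∧ co w'' c, so b is a read
        obtain ⟨w'', hw1, hw2⟩ := (hfr _ _).mp hfrbc
        have hRb : Rd b := (hrf_wf _ _ hw1).2.1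
        obtain ⟨wu, hwu, huniq⟩ := hrf_ex b hRb
        rcases ih with hxb | ⟨p, hcp, hrf'⟩ | ⟨p, hfp, hrf'⟩
        · rcases (hcom _ _).mp hxb with h1 | h2 | h3
          · exact absurd ⟨(hco_wf _ _ h1).2.1, hRb⟩ (hdisj b)
          · -- rf x b, uniqueness: x = w''
            have : x = w'' := (huniq x h2).trans (huniq w'' hw1).symm
            exact Or.inl ((hcom _ _).mpr (Or.inl (this ▸ hw2)))
          · obtain ⟨w', _, hw2'⟩ := (hfr _ _).mp h3
            exact absurd ⟨(hco_wf _ _ hw2').2.1, hRb⟩ (hdisj b)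
        · -- co x p, rf p b: p = w''
          have : p = w'' := (huniq p hrf').trans (huniq w'' hw1).symm
          exact Or.inl ((hcom _ _).mpr (Or.inl (hco_trans _ _ _ hcp (this ▸ hw2))))
        · -- fr x p, rf p b: p = w''
          have hpw : p = w'' := (huniq p hrf').trans (huniq w'' hw1).symm
          obtain ⟨w', hw1', hw2'⟩ := (hfr _ _).mp hfp
          exact Or.inl ((hcom _ _).mpr (Or.inr (Or.inr ((hfr _ _).mpr
            ⟨w', hw1', hco_trans _ _ _ hw2' (hpw ▸ hw2)⟩))))
  · rintro (h | ⟨p, h1, h2⟩ | ⟨p, h1, h2⟩)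
    · exact Relation.TransGen.single h
    · exact Relation.TransGen.head ((hcom _ _).mpr (Or.inl h1))
        (Relation.TransGen.single ((hcom _ _).mpr (Or.inr (Or.inl h2))))
    · exact Relation.TransGen.head ((hcom _ _).mpr (Or.inr (Or.inr h1)))
        (Relation.TransGen.single ((hcom _ _).mpr (Or.inr (Or.inl h2))))
end

section
/- The relation com followed by (com ∪ (co;rf) ∪ (fr;rf)) is contained in com ∪ (co;rf) ∪ (fr;rf): for all events x, p, y, if com x p and either com p y, or (co;rf) p y, or (fr;rf) p y, then com x y, or (co;rf) x y, or (fr;rf) x y. -/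
theorem com_seq_closure {E A : Type*} (W Rd : E → Prop) (addr : E → A)
    (co rf fr com : E → E → Prop)
    (hdisj : ∀ e, ¬ (W e ∧ Rd e))
    (hco_irr : ∀ x, ¬ co x x)
    (hco_trans : ∀ x y z, co x y → co y z → co x z)
    (hco_wf : ∀ x y, co x y → W x ∧ W y ∧ addr x = addr y)
    (hco_total : ∀ x y, W x → W y → addr x = addr y → co x y ∨ x = y ∨ co y x)
    (hrf_wf : ∀ w r, rf w r → W w ∧ Rd r ∧ addr w = addr r)
    (hrf_ex : ∀ r, Rd r → ∃! w, rf w r)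
    (hfr : ∀ r w, fr r w ↔ ∃ w', rf w' r ∧ co w' w)
    (hcom : ∀ x y, com x y ↔ co x y ∨ rf x y ∨ fr x y) :
    ∀ x p y, com x p → (com p y ∨ (∃ q, co p q ∧ rf q y) ∨ (∃ q, fr p q ∧ rf q y)) → (com x y ∨ (∃ q, co x q ∧ rf q y) ∨ (∃ q, fr x q ∧ rf q y)) := by
  intro x p y hxp hpy
  -- helper: uniqueness of rf into a read
  have huniq : ∀ w w' r, rf w r → rf w' r → w = w' := by
    intro w w' r h1 h2
    obtain ⟨u, _, hu⟩ := hrf_ex r (hrf_wf w r h1).2.1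
    rw [hu w h1, hu w' h2]
  rw [hcom] at hxp
  rcases hxp with hco1 | hrf1 | hfr1
  · -- com x p is co x p ; p is a write
    have hWp := (hco_wf x p hco1).2.1
    rcases hpy with hpy | ⟨q, hpq, hqy⟩ | ⟨q, hpq, hqy⟩
    · rw [hcom] at hpy
      rcases hpy with h | h | h
      · exact Or.inl ((hcom x y).2 (Or.inl (hco_trans x p y hco1 h)))
      · exact Or.inr (Or.inl ⟨p, hco1, h⟩)
      · obtain ⟨w', hw', _⟩ := (hfr p y).1 h
        exact absurd ⟨hWp, (hrf_wf w' p hw').2.1⟩ (hdisj p)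
    · exact Or.inr (Or.inl ⟨q, hco_trans x p q hco1 hpq, hqy⟩)
    · obtain ⟨w', hw', _⟩ := (hfr p q).1 hpq
      exact absurd ⟨hWp, (hrf_wf w' p hw').2.1⟩ (hdisj p)
  · -- com x p is rf x p ; p is a read
    have hRp := (hrf_wf x p hrf1).2.1
    rcases hpy with hpy | ⟨q, hpq, hqy⟩ | ⟨q, hpq, hqy⟩
    · rw [hcom] at hpy
      rcases hpy with h | h | h
      · exact absurd ⟨(hco_wf p y h).1, hRp⟩ (hdisj p)
      · exact absurd ⟨(hrf_wf p y h).1, hRp⟩ (hdisj p)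
      · obtain ⟨w', hw', hcw⟩ := (hfr p y).1 h
        have heq := huniq x w' p hrf1 hw'
        subst heq
        exact Or.inl ((hcom x y).2 (Or.inl hcw))
    · exact absurd ⟨(hco_wf p q hpq).1, hRp⟩ (hdisj p)
    · obtain ⟨w', hw', hcw⟩ := (hfr p q).1 hpq
      have heq := huniq x w' p hrf1 hw'
      subst heq
      exact Or.inr (Or.inl ⟨q, hcw, hqy⟩)
  · -- com x p is fr x p ; p is a write
    obtain ⟨w0, hw0, hcw0⟩ := (hfr x p).1 hfr1
    have hWp := (hco_wf w0 p hcw0).2.1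
    rcases hpy with hpy | ⟨q, hpq, hqy⟩ | ⟨q, hpq, hqy⟩
    · rw [hcom] at hpy
      rcases hpy with h | h | h
      · exact Or.inl ((hcom x y).2 (Or.inr (Or.inr ((hfr x y).2 ⟨w0, hw0, hco_trans w0 p y hcw0 h⟩))))
      · exact Or.inr (Or.inr ⟨p, hfr1, h⟩)
      · obtain ⟨w', hw', _⟩ := (hfr p y).1 h
        exact absurd ⟨hWp, (hrf_wf w' p hw').2.1⟩ (hdisj p)
    · exact Or.inr (Or.inr ⟨q, (hfr x q).2 ⟨w0, hw0, hco_trans w0 p q hcw0 hpq⟩, hqy⟩)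
    · obtain ⟨w', hw', _⟩ := (hfr p q).1 hpq
      exact absurd ⟨hWp, (hrf_wf w' p hw').2.1⟩ (hdisj p)
end

section
/- The transitive closure com⁺ of com is irreflexive: for no event x does com⁺ x x hold. -/
theorem com_plus_irreflexive {E A : Type*} (W Rd : E → Prop) (addr : E → A)
    (co rf fr com : E → E → Prop)
    (hdisj : ∀ e, ¬ (W e ∧ Rd e))
    (hco_irr : ∀ x, ¬ co x x)
    (hco_trans : ∀ x y z, co x y → co y z → co x z)
    (hco_wf : ∀ x y, co x y → W x ∧ W y ∧ addr x = addr y)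
    (hco_total : ∀ x y, W x → W y → addr x = addr y → co x y ∨ x = y ∨ co y x)
    (hrf_wf : ∀ w r, rf w r → W w ∧ Rd r ∧ addr w = addr r)
    (hrf_ex : ∀ r, Rd r → ∃! w, rf w r)
    (hfr : ∀ r w, fr r w ↔ ∃ w', rf w' r ∧ co w' w)
    (hcom : ∀ x y, com x y ↔ co x y ∨ rf x y ∨ fr x y) :
    ∀ x, ¬ Relation.TransGen com x x := by
  classical
  set f : E → E := fun e => if h : ∃ w, rf w e then h.choose else e with hf
  have hfW : ∀ e, W e → f e = e := by
    intro e he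
    have : ¬ ∃ w, rf w e := by
      rintro ⟨w, hw⟩
      exact hdisj e ⟨he, (hrf_wf w e hw).2.1⟩
    simp [hf, this]
  have hfR : ∀ w r, rf w r → f r = w := by
    intro w r hw
    have hex : ∃ w, rf w r := ⟨w, hw⟩
    have h1 : rf hex.choose r := hex.choose_spec
    have hr : Rd r := (hrf_wf w r hw).2.1
    obtain ⟨u, _, huniq⟩ := hrf_ex r hr
    have : hex.choose = w := (huniq _ h1).trans (huniq w hw).symm
    simp [hf, hex, this]
  -- key: along a step, f-images are co-related or it's an rf edge
  have key : ∀ x y, Relation.TransGen com x y → co (f x) (f y) ∨ rf x y := by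
    intro x y h
    induction h with
    | single hxy =>
      rcases (hcom _ _).1 hxy with h | h | h
      · obtain ⟨hwx, hwy, _⟩ := hco_wf _ _ h
        rw [hfW _ hwx, hfW _ hwy]; exact Or.inl h
      · exact Or.inr h
      · obtain ⟨w', hw', hco'⟩ := (hfr _ _).1 h
        left
        rw [hfR _ _ hw', hfW _ (hco_wf _ _ hco').2.1]
        exact hco'
    | tail _ hyz ih =>
      rename_i b c _
      rcases (hcom _ _).1 hyz with h | h | h
      · obtain ⟨hwb, hwc, _⟩ := hco_wf _ _ h
        rcases ih with ih | ih
        · left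
          rw [hfW _ hwc]
          exact hco_trans _ _ _ ih (by rw [hfW _ hwb]; exact h)
        · exact absurd ⟨hwb, (hrf_wf _ _ ih).2.1⟩ (hdisj b)
      · left
        have hb : W b := (hrf_wf _ _ h).1
        have hfc : f c = b := hfR _ _ h
        rw [hfc]
        rcases ih with ih | ih
        · rwa [hfW _ hb] at ih
        · exact absurd ⟨hb, (hrf_wf _ _ ih).2.1⟩ (hdisj b)
      · obtain ⟨w', hw', hco'⟩ := (hfr _ _).1 h
        have hfb : f b = w' := hfR _ _ hw'
        have hfc : f c = c := hfW _ (hco_wf _ _ hco').2.1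
        left
        rw [hfc]
        rcases ih with ih | ih
        · exact hco_trans _ _ _ ih (hfb ▸ hco')
        · rw [hfW _ (hrf_wf _ _ ih).1]
          have : x = w' := by
            obtain ⟨u, _, huniq⟩ := hrf_ex b (hrf_wf _ _ ih).2.1
            exact (huniq _ ih).trans (huniq _ hw').symm
          rw [this]; exact hco'
  intro x hx
  rcases key x x hx with h | h
  · exact hco_irr _ h
  · exact hdisj x ⟨(hrf_wf _ _ h).1, (hrf_wf _ _ h).2.1⟩
end

section
/- (Totality of com⁺.) Let x and y be events, each of which is a read or a write, with addr x = addr y. Then at least one of the following holds: (1) com⁺ x y; (2) x and y are both writes and x = y; (3) x and y are both reads and they read from the same write (i.e., there is a write w with rf w x and rf w y); (4) com⁺ y x. -/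
theorem com_plus_total {E A : Type*} (W Rd : E → Prop) (addr : E → A)
    (co rf fr com : E → E → Prop)
    (hdisj : ∀ e, ¬ (W e ∧ Rd e))
    (hco_irr : ∀ x, ¬ co x x)
    (hco_trans : ∀ x y z, co x y → co y z → co x z)
    (hco_wf : ∀ x y, co x y → W x ∧ W y ∧ addr x = addr y)
    (hco_total : ∀ x y, W x → W y → addr x = addr y → co x y ∨ x = y ∨ co y x)
    (hrf_wf : ∀ w r, rf w r → W w ∧ Rd r ∧ addr w = addr r)
    (hrf_ex : ∀ r, Rd r → ∃! w, rf w r)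
    (hfr : ∀ r w, fr r w ↔ ∃ w', rf w' r ∧ co w' w)
    (hcom : ∀ x y, com x y ↔ co x y ∨ rf x y ∨ fr x y) :
    ∀ x y, (Rd x ∨ W x) → (Rd y ∨ W y) → addr x = addr y →
      Relation.TransGen com x y ∨
      (W x ∧ W y ∧ x = y) ∨
      (Rd x ∧ Rd y ∧ ∃ w, W w ∧ rf w x ∧ rf w y) ∨
      Relation.TransGen com y x := by
  intro x y hx hy haddr
  have single : ∀ a b, com a b → Relation.TransGen com a b := fun a b h =>
    Relation.TransGen.single h
  rcases hx with hxR | hxW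
  · obtain ⟨w1, hw1, _⟩ := hrf_ex x hxR
    obtain ⟨hw1W, _, hw1a⟩ := hrf_wf w1 x hw1
    rcases hy with hyR | hyW
    · obtain ⟨w2, hw2, _⟩ := hrf_ex y hyR
      obtain ⟨hw2W, _, hw2a⟩ := hrf_wf w2 y hw2
      rcases hco_total w1 w2 hw1W hw2W (by rw [hw1a, hw2a, haddr]) with h | h | h
      · left
        exact Relation.TransGen.head ((hcom x w2).2 (Or.inr (Or.inr ((hfr x w2).2 ⟨w1, hw1, h⟩))))
          (single _ _ ((hcom w2 y).2 (Or.inr (Or.inl hw2))))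
      · exact Or.inr (Or.inr (Or.inl ⟨hxR, hyR, w1, hw1W, hw1, h ▸ hw2⟩))
      · right; right; right
        exact Relation.TransGen.head ((hcom y w1).2 (Or.inr (Or.inr ((hfr y w1).2 ⟨w2, hw2, h⟩))))
          (single _ _ ((hcom w1 x).2 (Or.inr (Or.inl hw1))))
    · rcases hco_total w1 y hw1W hyW (by rw [hw1a, haddr]) with h | h | h
      · exact Or.inl (single _ _ ((hcom x y).2 (Or.inr (Or.inr ((hfr x y).2 ⟨w1, hw1, h⟩)))))
      · right; right; right
        exact single _ _ ((hcom y x).2 (Or.inr (Or.inl (h ▸ hw1))))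
      · right; right; right
        exact Relation.TransGen.head ((hcom y w1).2 (Or.inl h))
          (single _ _ ((hcom w1 x).2 (Or.inr (Or.inl hw1))))
  · rcases hy with hyR | hyW
    · obtain ⟨w2, hw2, _⟩ := hrf_ex y hyR
      obtain ⟨hw2W, _, hw2a⟩ := hrf_wf w2 y hw2
      rcases hco_total x w2 hxW hw2W (by rw [hw2a, haddr]) with h | h | h
      · left
        exact Relation.TransGen.head ((hcom x w2).2 (Or.inl h))
          (single _ _ ((hcom w2 y).2 (Or.inr (Or.inl hw2))))
      · exact Or.inl (single _ _ ((hcom x y).2 (Or.inr (Or.inl (h ▸ hw2)))))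
      · right; right; right
        exact single _ _ ((hcom y x).2 (Or.inr (Or.inr ((hfr y x).2 ⟨w2, hw2, h⟩))))
    · rcases hco_total x y hxW hyW haddr with h | h | h
      · exact Or.inl (single _ _ ((hcom x y).2 (Or.inl h)))
      · exact Or.inr (Or.inl ⟨hxW, hyW, h⟩)
      · exact Or.inr (Or.inr (Or.inr (single _ _ ((hcom y x).2 (Or.inl h)))))
end

section
/- (Read-source substitution, left version.) If x and y are reads that read from the same write (i.e., there is a write w with rf w x and rf w y), and com⁺ x z for some event z, then com⁺ y z. -/
theorem read_source_subst_left {E A : Type*} (W Rd : E → Prop) (addr : E → A)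
    (co rf fr com : E → E → Prop)
    (hdisj : ∀ e, ¬ (W e ∧ Rd e))
    (hco_irr : ∀ x, ¬ co x x)
    (hco_trans : ∀ x y z, co x y → co y z → co x z)
    (hco_wf : ∀ x y, co x y → W x ∧ W y ∧ addr x = addr y)
    (hco_total : ∀ x y, W x → W y → addr x = addr y → co x y ∨ x = y ∨ co y x)
    (hrf_wf : ∀ w r, rf w r → W w ∧ Rd r ∧ addr w = addr r)
    (hrf_ex : ∀ r, Rd r → ∃! w, rf w r)
    (hfr : ∀ r w, fr r w ↔ ∃ w', rf w' r ∧ co w' w)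
    (hcom : ∀ x y, com x y ↔ co x y ∨ rf x y ∨ fr x y) :
    ∀ x y z, Rd x → Rd y → (∃ w, W w ∧ rf w x ∧ rf w y) → Relation.TransGen com x z → Relation.TransGen com y z := by
  intro x y z hx hy ⟨w, hW, hwx, hwy⟩ htc
  have key : ∀ u, com x u → com y u := by
    intro u hxu
    rcases (hcom x u).1 hxu with hco | hrf | hfr'
    · exact absurd ⟨(hco_wf x u hco).1, hx⟩ (hdisj x)
    · exact absurd ⟨(hrf_wf x u hrf).1, hx⟩ (hdisj x)
    · obtain ⟨w', hw'x, hw'u⟩ := (hfr x u).1 hfr'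
      obtain ⟨w0, hw0, huniq⟩ := hrf_ex x hx
      have : w' = w := (huniq w' hw'x).trans (huniq w hwx).symm
      exact (hcom y u).2 (Or.inr (Or.inr ((hfr y u).2 ⟨w, hwy, this ▸ hw'u⟩)))
  have first : ∃ u, com x u ∧ (u = z ∨ Relation.TransGen com u z) := by
    induction htc with
    | single h => exact ⟨_, h, Or.inl rfl⟩
    | tail _ hbz ih =>
      obtain ⟨u, hxu, h⟩ := ih
      rcases h with rfl | h
      · exact ⟨u, hxu, Or.inr (Relation.TransGen.single hbz)⟩
      · exact ⟨u, hxu, Or.inr (h.tail hbz)⟩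
  obtain ⟨u, hxu, h⟩ := first
  rcases h with rfl | h
  · exact Relation.TransGen.single (key _ hxu)
  · exact Relation.TransGen.head (key _ hxu) h
end

section
/- (Read-source substitution, right version.) If x and y are reads that read from the same write (i.e., there is a write w with rf w x and rf w y), and com⁺ z x for some event z, then com⁺ z y. -/
theorem read_source_subst_right {E A : Type*} (W Rd : E → Prop) (addr : E → A)
    (co rf fr com : E → E → Prop)
    (hdisj : ∀ e, ¬ (W e ∧ Rd e))
    (hco_irr : ∀ x, ¬ co x x)
    (hco_trans : ∀ x y z, co x y → co y z → co x z)
    (hco_wf : ∀ x y, co x y → W x ∧ W y ∧ addr x = addr y)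
    (hco_total : ∀ x y, W x → W y → addr x = addr y → co x y ∨ x = y ∨ co y x)
    (hrf_wf : ∀ w r, rf w r → W w ∧ Rd r ∧ addr w = addr r)
    (hrf_ex : ∀ r, Rd r → ∃! w, rf w r)
    (hfr : ∀ r w, fr r w ↔ ∃ w', rf w' r ∧ co w' w)
    (hcom : ∀ x y, com x y ↔ co x y ∨ rf x y ∨ fr x y) :
    ∀ x y z, Rd x → Rd y → (∃ w, W w ∧ rf w x ∧ rf w y) → Relation.TransGen com z x → Relation.TransGen com z y := by
  intro x y z hx hy ⟨w, hW, hwx, hwy⟩ htg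
  -- any com edge into the read x must be rf, and its source must be w
  have key : ∀ a, com a x → a = w := by
    intro a hax
    rcases (hcom a x).mp hax with h | h | h
    · exact absurd ⟨(hco_wf a x h).2.1, hx⟩ (hdisj x)
    · obtain ⟨w', hw', hu⟩ := hrf_ex x hx
      rw [hu a h, hu w hwx]
    · obtain ⟨w', _, hco⟩ := (hfr a x).mp h
      exact absurd ⟨(hco_wf w' x hco).2.1, hx⟩ (hdisj x)
  have hwycom : com w y := (hcom w y).mpr (Or.inr (Or.inl hwy))
  cases htg with
  | single h => exact (key z h) ▸ Relation.TransGen.single hwycom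
  | tail htg' h => exact Relation.TransGen.tail (key _ h ▸ htg') hwycom
end

section
/- SC-Per-Location-2 implies SC-Per-Location: if for all events x and y, pol x y implies ¬ com⁺ y x, then the relation pol ∪ com is acyclic (i.e., its transitive closure is irreflexive). -/
/-- `wlink W rf w x` : `w` is the write "associated" to `x`:
`x` itself if `x` is a write, or the write `x` reads from. -/
def wlink {E : Type*} (W : E → Prop) (rf : E → E → Prop) (w x : E) : Prop :=
  (W x ∧ w = x) ∨ rf w x

/-- A strict order on read/write events of a given address. -/
def prec {E : Type*} (W Rd : E → Prop) (po co rf : E → E → Prop) (x y : E) : Prop :=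
  (∃ wx wy, wlink W rf wx x ∧ wlink W rf wy y ∧ co wx wy) ∨
  (∃ w, wlink W rf w x ∧ wlink W rf w y ∧ ((W x ∧ Rd y) ∨ (Rd x ∧ Rd y ∧ po x y)))

theorem sc_per_location_2_implies_1 {E A P : Type*} (W Rd : E → Prop) (addr : E → A) (proc : E → P)
    (po co rf fr com pol : E → E → Prop)
    (hdisj : ∀ e, ¬ (W e ∧ Rd e))
    (hpo_irr : ∀ x, ¬ po x x)
    (hpo_trans : ∀ x y z, po x y → po y z → po x z)
    (hpo_proc : ∀ x y, po x y → proc x = proc y)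
    (hpo_total : ∀ x y, x ≠ y → proc x = proc y → po x y ∨ po y x)
    (hco_irr : ∀ x, ¬ co x x)
    (hco_trans : ∀ x y z, co x y → co y z → co x z)
    (hco_wf : ∀ x y, co x y → W x ∧ W y ∧ addr x = addr y)
    (hco_total : ∀ x y, W x → W y → addr x = addr y → co x y ∨ x = y ∨ co y x)
    (hrf_wf : ∀ w r, rf w r → W w ∧ Rd r ∧ addr w = addr r)
    (hrf_ex : ∀ r, Rd r → ∃! w, rf w r)
    (hfr : ∀ r w, fr r w ↔ ∃ w', rf w' r ∧ co w' w)
    (hcom : ∀ x y, com x y ↔ co x y ∨ rf x y ∨ fr x y)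
    (hpol : ∀ x y, pol x y ↔ po x y ∧ addr x = addr y) :
    (∀ x y, pol x y → ¬ Relation.TransGen com y x) → ∀ x, ¬ Relation.TransGen (fun a b => pol a b ∨ com a b) x x := by
  intro Hsc x0 hcyc
  classical
  set pr := prec W Rd po co rf with hprdef
  -- basic facts about wlink
  have wl_W : ∀ w x, wlink W rf w x → W w := by
    rintro w x (⟨hW, rfl⟩ | hr)
    · exact hW
    · exact (hrf_wf _ _ hr).1
  have wl_addr : ∀ w x, wlink W rf w x → addr w = addr x := by
    rintro w x (⟨hW, rfl⟩ | hr)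
    · rfl
    · exact (hrf_wf _ _ hr).2.2
  have wl_RW : ∀ w x, wlink W rf w x → W x ∨ Rd x := by
    rintro w x (⟨hW, rfl⟩ | hr)
    · exact Or.inl hW
    · exact Or.inr (hrf_wf _ _ hr).2.1
  have wl_Weq : ∀ w x, wlink W rf w x → W x → w = x := by
    rintro w x (⟨_, rfl⟩ | hr) hW
    · rfl
    · exact absurd ⟨hW, (hrf_wf _ _ hr).2.1⟩ (hdisj x)
  have wl_Rrf : ∀ w x, wlink W rf w x → Rd x → rf w x := by
    rintro w x (⟨hW, rfl⟩ | hr) hR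
    · exact absurd ⟨hW, hR⟩ (hdisj _)
    · exact hr
  have wl_uniq : ∀ w w' x, wlink W rf w x → wlink W rf w' x → w = w' := by
    intro w w' x h1 h2
    rcases wl_RW w x h1 with hW | hR
    · rw [wl_Weq w x h1 hW, wl_Weq w' x h2 hW]
    · exact (hrf_ex x hR).unique (wl_Rrf _ _ h1 hR) (wl_Rrf _ _ h2 hR)
  have RW_wl : ∀ x, W x ∨ Rd x → ∃ w, wlink W rf w x := by
    intro x hx
    rcases hx with hW | hR
    · exact ⟨x, Or.inl ⟨hW, rfl⟩⟩
    · obtain ⟨w, hw, _⟩ := hrf_ex x hR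
      exact ⟨w, Or.inr hw⟩
  -- com is included in pr
  have com_pr : ∀ x y, com x y → pr x y := by
    intro x y h
    rcases (hcom x y).1 h with hc | hr | hf
    · exact Or.inl ⟨x, y, Or.inl ⟨(hco_wf _ _ hc).1, rfl⟩,
        Or.inl ⟨(hco_wf _ _ hc).2.1, rfl⟩, hc⟩
    · exact Or.inr ⟨x, Or.inl ⟨(hrf_wf _ _ hr).1, rfl⟩, Or.inr hr,
        Or.inl ⟨(hrf_wf _ _ hr).1, (hrf_wf _ _ hr).2.1⟩⟩
    · obtain ⟨w', hrf', hco'⟩ := (hfr x y).1 hf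
      exact Or.inl ⟨w', y, Or.inr hrf', Or.inl ⟨(hco_wf _ _ hco').2.1, rfl⟩, hco'⟩
  have pr_RW : ∀ x y, pr x y → (W x ∨ Rd x) ∧ (W y ∨ Rd y) := by
    intro x y h
    rcases h with ⟨wx, wy, hwx, hwy, _⟩ | ⟨w, hwx, hwy, _⟩
    · exact ⟨wl_RW _ _ hwx, wl_RW _ _ hwy⟩
    · exact ⟨wl_RW _ _ hwx, wl_RW _ _ hwy⟩
  have com_RW : ∀ x y, com x y → (W x ∨ Rd x) ∧ (W y ∨ Rd y) :=
    fun x y h => pr_RW x y (com_pr x y h)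
  have pr_irr : ∀ x, ¬ pr x x := by
    intro x h
    rcases h with ⟨wx, wy, hwx, hwy, hc⟩ | ⟨w, _, _, htie⟩
    · exact hco_irr wx (wl_uniq wx wy x hwx hwy ▸ hc)
    · rcases htie with ⟨hW, hR⟩ | ⟨_, _, hp⟩
      · exact hdisj x ⟨hW, hR⟩
      · exact hpo_irr x hp
  have pr_trans : ∀ x y z, pr x y → pr y z → pr x z := by
    intro x y z h1 h2
    rcases h1 with ⟨wx, wy, hwx, hwy, hc1⟩ | ⟨w, hwx, hwy, htie1⟩ <;>
      rcases h2 with ⟨wy', wz, hwy', hwz, hc2⟩ | ⟨w', hwy', hwz, htie2⟩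
    · exact Or.inl ⟨wx, wz, hwx, hwz, hco_trans _ _ _ hc1 (wl_uniq wy' wy y hwy' hwy ▸ hc2)⟩
    · exact Or.inl ⟨wx, w', hwx, hwz, wl_uniq wy w' y hwy hwy' ▸ hc1⟩
    · exact Or.inl ⟨w, wz, hwx, hwz, wl_uniq wy' w y hwy' hwy ▸ hc2⟩
    · have hww : w = w' := wl_uniq w w' y hwy hwy'
      subst hww
      rcases htie1 with ⟨hWx, hRy⟩ | ⟨hRx, hRy, hp1⟩ <;>
        rcases htie2 with ⟨hWy, hRz⟩ | ⟨hRy2, hRz, hp2⟩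
      · exact absurd ⟨hWy, hRy⟩ (hdisj y)
      · exact Or.inr ⟨w, hwx, hwz, Or.inl ⟨hWx, hRz⟩⟩
      · exact absurd ⟨hWy, hRy⟩ (hdisj y)
      · exact Or.inr ⟨w, hwx, hwz, Or.inr ⟨hRx, hRz, hpo_trans _ _ _ hp1 hp2⟩⟩
  -- pol between read/write events is included in pr (uses SC-per-location-2)
  have pol_pr : ∀ x y, pol x y → (W x ∨ Rd x) → (W y ∨ Rd y) → pr x y := by
    intro x y h hx hy
    obtain ⟨hpo', haddr⟩ := (hpol x y).1 h
    have hxy : x ≠ y := fun e => hpo_irr x (e ▸ hpo')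
    obtain ⟨wx, hwx⟩ := RW_wl x hx
    obtain ⟨wy, hwy⟩ := RW_wl y hy
    have haw : addr wx = addr wy := by
      rw [wl_addr _ _ hwx, haddr, wl_addr _ _ hwy]
    rcases hco_total wx wy (wl_W _ _ hwx) (wl_W _ _ hwy) haw with hc | he | hc'
    · exact Or.inl ⟨wx, wy, hwx, hwy, hc⟩
    · subst he
      rcases hx with hWx | hRx <;> rcases hy with hWy | hRy
      · exact absurd ((wl_Weq _ _ hwx hWx).symm.trans (wl_Weq _ _ hwy hWy)) hxy
      · exact Or.inr ⟨wx, hwx, hwy, Or.inl ⟨hWx, hRy⟩⟩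
      · -- rf y x : com y x, contradicting SC2
        have : rf y x := (wl_Weq _ _ hwy hWy) ▸ wl_Rrf _ _ hwx hRx
        exact absurd (Relation.TransGen.single ((hcom y x).2 (Or.inr (Or.inl this))))
          (Hsc x y h)
      · exact Or.inr ⟨wx, hwx, hwy, Or.inr ⟨hRx, hRy, hpo'⟩⟩
    · -- co wy wx : build com⁺ y x, contradicting SC2
      exfalso
      have step1 : Relation.TransGen com y wx := by
        rcases hy with hWy | hRy
        · exact Relation.TransGen.single ((hcom y wx).2 (Or.inl ((wl_Weq _ _ hwy hWy) ▸ hc')))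
        · exact Relation.TransGen.single ((hcom y wx).2
            (Or.inr (Or.inr ((hfr y wx).2 ⟨wy, wl_Rrf _ _ hwy hRy, hc'⟩))))
      rcases hx with hWx | hRx
      · exact Hsc x y h ((wl_Weq _ _ hwx hWx) ▸ step1)
      · exact Hsc x y h (step1.tail ((hcom wx x).2 (Or.inr (Or.inl (wl_Rrf _ _ hwx hRx)))))
  have pol_trans : ∀ x y z, pol x y → pol y z → pol x z := by
    intro x y z h1 h2
    obtain ⟨hp1, ha1⟩ := (hpol x y).1 h1
    obtain ⟨hp2, ha2⟩ := (hpol y z).1 h2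
    exact (hpol x z).2 ⟨hpo_trans _ _ _ hp1 hp2, ha1.trans ha2⟩
  -- main invariant
  have main : ∀ b, Relation.TransGen (fun a b => pol a b ∨ com a b) x0 b →
      pol x0 b ∨ pr x0 b ∨ (∃ u, pol x0 u ∧ pr u b) ∨ (∃ v, pr x0 v ∧ pol v b) ∨
      (∃ u v, pol x0 u ∧ pr u v ∧ pol v b) := by
    intro b h
    induction h with
    | single hs =>
      rcases hs with hp | hcm
      · exact Or.inl hp
      · exact Or.inr (Or.inl (com_pr _ _ hcm))
    | @tail b c h1 hs ih =>
      rcases hs with hp | hcm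
      · -- step pol b c
        by_cases hRWc : W c ∨ Rd c
        · rcases ih with h0 | h0 | ⟨u, hpu, hub⟩ | ⟨v, hv, hvb⟩ | ⟨u, v, hu, huv, hvb⟩
          · exact Or.inl (pol_trans _ _ _ h0 hp)
          · exact Or.inr (Or.inl (pr_trans _ _ _ h0 (pol_pr _ _ hp (pr_RW _ _ h0).2 hRWc)))
          · exact Or.inr (Or.inr (Or.inl ⟨u, hpu,
              pr_trans _ _ _ hub (pol_pr _ _ hp (pr_RW _ _ hub).2 hRWc)⟩))
          · exact Or.inr (Or.inr (Or.inr (Or.inl ⟨v, hv, pol_trans _ _ _ hvb hp⟩)))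
          · exact Or.inr (Or.inr (Or.inr (Or.inr ⟨u, v, hu, huv, pol_trans _ _ _ hvb hp⟩)))
        · rcases ih with h0 | h0 | ⟨u, hpu, hub⟩ | ⟨v, hv, hvb⟩ | ⟨u, v, hu, huv, hvb⟩
          · exact Or.inl (pol_trans _ _ _ h0 hp)
          · exact Or.inr (Or.inr (Or.inr (Or.inl ⟨b, h0, hp⟩)))
          · exact Or.inr (Or.inr (Or.inr (Or.inr ⟨u, b, hpu, hub, hp⟩)))
          · exact Or.inr (Or.inr (Or.inr (Or.inl ⟨v, hv, pol_trans _ _ _ hvb hp⟩)))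
          · exact Or.inr (Or.inr (Or.inr (Or.inr ⟨u, v, hu, huv, pol_trans _ _ _ hvb hp⟩)))
      · -- step com b c
        have hbc : pr b c := com_pr _ _ hcm
        rcases ih with h0 | h0 | ⟨u, hpu, hub⟩ | ⟨v, hv, hvb⟩ | ⟨u, v, hu, huv, hvb⟩
        · exact Or.inr (Or.inr (Or.inl ⟨b, h0, hbc⟩))
        · exact Or.inr (Or.inl (pr_trans _ _ _ h0 hbc))
        · exact Or.inr (Or.inr (Or.inl ⟨u, hpu, pr_trans _ _ _ hub hbc⟩))
        · have : pr v b := pol_pr _ _ hvb (pr_RW _ _ hv).2 (com_RW _ _ hcm).1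
          exact Or.inr (Or.inl (pr_trans _ _ _ hv (pr_trans _ _ _ this hbc)))
        · have : pr v b := pol_pr _ _ hvb (pr_RW _ _ huv).2 (com_RW _ _ hcm).1
          exact Or.inr (Or.inr (Or.inl ⟨u, hu, pr_trans _ _ _ huv (pr_trans _ _ _ this hbc)⟩))
  rcases main x0 hcyc with h0 | h0 | ⟨u, hpu, hux⟩ | ⟨v, hv, hvx⟩ | ⟨u, v, hu, huv, hvx⟩
  · exact hpo_irr x0 ((hpol x0 x0).1 h0).1
  · exact pr_irr x0 h0
  · have : pr x0 u := pol_pr _ _ hpu (pr_RW _ _ hux).2 (pr_RW _ _ hux).1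
    exact pr_irr x0 (pr_trans _ _ _ this hux)
  · have : pr v x0 := pol_pr _ _ hvx (pr_RW _ _ hv).2 (pr_RW _ _ hv).1
    exact pr_irr x0 (pr_trans _ _ _ hv this)
  · have : pr v u := pol_pr _ _ (pol_trans _ _ _ hvx hu) (pr_RW _ _ huv).2 (pr_RW _ _ huv).1
    exact pr_irr u (pr_trans _ _ _ huv this)
end

section
/- (Equivalence theorem.) The relation pol ∪ com is acyclic (i.e., its transitive closure is irreflexive) if and only if for all events x and y, pol x y implies ¬ com⁺ y x. -/
theorem sc_per_location_equiv {E A P : Type*} (W Rd : E → Prop) (addr : E → A) (proc : E → P)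
    (po co rf fr com pol : E → E → Prop)
    (hdisj : ∀ e, ¬ (W e ∧ Rd e))
    (hpo_irr : ∀ x, ¬ po x x)
    (hpo_trans : ∀ x y z, po x y → po y z → po x z)
    (hpo_proc : ∀ x y, po x y → proc x = proc y)
    (hpo_total : ∀ x y, x ≠ y → proc x = proc y → po x y ∨ po y x)
    (hco_irr : ∀ x, ¬ co x x)
    (hco_trans : ∀ x y z, co x y → co y z → co x z)
    (hco_wf : ∀ x y, co x y → W x ∧ W y ∧ addr x = addr y)
    (hco_total : ∀ x y, W x → W y → addr x = addr y → co x y ∨ x = y ∨ co y x)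
    (hrf_wf : ∀ w r, rf w r → W w ∧ Rd r ∧ addr w = addr r)
    (hrf_ex : ∀ r, Rd r → ∃! w, rf w r)
    (hfr : ∀ r w, fr r w ↔ ∃ w', rf w' r ∧ co w' w)
    (hcom : ∀ x y, com x y ↔ co x y ∨ rf x y ∨ fr x y)
    (hpol : ∀ x y, pol x y ↔ po x y ∧ addr x = addr y) :
    (∀ x, ¬ Relation.TransGen (fun a b => pol a b ∨ com a b) x x) ↔ (∀ x y, pol x y → ¬ Relation.TransGen com y x) := by
  -- rf uniqueness helper
  have hrfu : ∀ w w' r, rf w r → rf w' r → w = w' := by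
    intro w w' r h h'
    obtain ⟨u, _, hu⟩ := hrf_ex r (hrf_wf w r h).2.1
    rw [hu w h, hu w' h']
  -- fr ; co ⊆ fr
  have hfrco : ∀ a b c, fr a b → co b c → fr a c := by
    intro a b c hab hbc
    obtain ⟨w', hw', hco'⟩ := (hfr a b).1 hab
    exact (hfr a c).2 ⟨w', hw', hco_trans _ _ _ hco' hbc⟩
  -- target of a com edge is a memory event
  have hmem : ∀ a b, com a b → W b ∨ Rd b := by
    intro a b h
    rcases (hcom a b).1 h with h | h | h
    · exact Or.inl (hco_wf _ _ h).2.1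
    · exact Or.inr (hrf_wf _ _ h).2.1
    · obtain ⟨w', _, hco'⟩ := (hfr a b).1 h
      exact Or.inl (hco_wf _ _ hco').2.1
  have hmemT : ∀ a b, Relation.TransGen com a b → W b ∨ Rd b := by
    intro a b h
    induction h with
    | single h => exact hmem _ _ h
    | tail _ h _ => exact hmem _ _ h
  -- shapes of com⁺
  have shapes : ∀ x y, Relation.TransGen com x y →
      co x y ∨ rf x y ∨ fr x y ∨ ∃ w, (co x w ∨ fr x w) ∧ rf w y := by
    intro x y h
    induction h with
    | single h =>
      rcases (hcom _ _).1 h with h | h | h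
      · exact Or.inl h
      · exact Or.inr (Or.inl h)
      · exact Or.inr (Or.inr (Or.inl h))
    | @tail b c _ h ih =>
      rcases (hcom _ _).1 h with h | h | h
      · -- co b c, so W b
        have hWb := (hco_wf _ _ h).1
        rcases ih with ih | ih | ih | ⟨w, _, hw2⟩
        · exact Or.inl (hco_trans _ _ _ ih h)
        · exact absurd ⟨hWb, (hrf_wf _ _ ih).2.1⟩ (hdisj b)
        · exact Or.inr (Or.inr (Or.inl (hfrco _ _ _ ih h)))
        · exact absurd ⟨hWb, (hrf_wf _ _ hw2).2.1⟩ (hdisj b)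
      · -- rf b c, so W b
        have hWb := (hrf_wf _ _ h).1
        rcases ih with ih | ih | ih | ⟨w, _, hw2⟩
        · exact Or.inr (Or.inr (Or.inr ⟨b, Or.inl ih, h⟩))
        · exact absurd ⟨hWb, (hrf_wf _ _ ih).2.1⟩ (hdisj b)
        · exact Or.inr (Or.inr (Or.inr ⟨b, Or.inr ih, h⟩))
        · exact absurd ⟨hWb, (hrf_wf _ _ hw2).2.1⟩ (hdisj b)
      · -- fr b c, so b is a read with writer w'
        obtain ⟨w', hw', hco'⟩ := (hfr b c).1 h
        have hRb := (hrf_wf _ _ hw').2.1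
        rcases ih with ih | ih | ih | ⟨w, hw1, hw2⟩
        · exact absurd ⟨(hco_wf _ _ ih).2.1, hRb⟩ (hdisj b)
        · have := hrfu _ _ _ ih hw'
          subst this
          exact Or.inl hco'
        · obtain ⟨w'', _, hco''⟩ := (hfr x b).1 ih
          exact absurd ⟨(hco_wf _ _ hco'').2.1, hRb⟩ (hdisj b)
        · have := hrfu _ _ _ hw2 hw'
          subst this
          rcases hw1 with hw1 | hw1
          · exact Or.inl (hco_trans _ _ _ hw1 hco')
          · exact Or.inr (Or.inr (Or.inl (hfrco _ _ _ hw1 hco')))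
  -- com is acyclic
  have hcomacyc : ∀ x, ¬ Relation.TransGen com x x := by
    intro x hx
    rcases shapes x x hx with h | h | h | ⟨w, hw1, hw2⟩
    · exact hco_irr x h
    · exact hdisj x ⟨(hrf_wf _ _ h).1, (hrf_wf _ _ h).2.1⟩
    · obtain ⟨w', hw', hco'⟩ := (hfr x x).1 h
      exact hdisj x ⟨(hco_wf _ _ hco').2.1, (hrf_wf _ _ hw').2.1⟩
    · rcases hw1 with hw1 | hw1
      · exact hdisj x ⟨(hco_wf _ _ hw1).1, (hrf_wf _ _ hw2).2.1⟩
      · obtain ⟨w', hw', hco'⟩ := (hfr x w).1 hw1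
        have := hrfu _ _ _ hw' hw2
        subst this
        exact hco_irr _ hco'
  constructor
  · intro hac x y hxy hcyc
    exact hac x (Relation.TransGen.head (Or.inl hxy)
      (Relation.TransGen.mono (p := fun a b => pol a b ∨ com a b) (fun a b h => Or.inr h) _ _ hcyc))
  · intro H x hcyc
    -- key lemma L
    have L : ∀ c d, (W c ∨ Rd c) → pol c d →
        Relation.TransGen com c d ∨ (∀ v, com d v → com c v) := by
      intro c d hc hcd
      obtain ⟨hpo', haddr'⟩ := (hpol c d).1 hcd
      by_cases hWd : W d
      · rcases hc with hWc | hRc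
        · rcases hco_total c d hWc hWd haddr' with h | h | h
          · exact Or.inl (Relation.TransGen.single ((hcom c d).2 (Or.inl h)))
          · subst h; exact absurd hpo' (hpo_irr c)
          · exact absurd (Relation.TransGen.single ((hcom d c).2 (Or.inl h))) (H c d hcd)
        · obtain ⟨w, hw, -⟩ := hrf_ex c hRc
          have haw : addr w = addr d := (hrf_wf _ _ hw).2.2.trans haddr'
          rcases hco_total w d (hrf_wf _ _ hw).1 hWd haw with h | h | h
          · exact Or.inl (Relation.TransGen.single ((hcom c d).2 (Or.inr (Or.inr ((hfr c d).2 ⟨w, hw, h⟩)))))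
          · subst h
            exact absurd (Relation.TransGen.single ((hcom w c).2 (Or.inr (Or.inl hw)))) (H c w hcd)
          · exact absurd (Relation.TransGen.head ((hcom d w).2 (Or.inl h))
              (Relation.TransGen.single ((hcom w c).2 (Or.inr (Or.inl hw))))) (H c d hcd)
      · by_cases hRd' : Rd d
        · obtain ⟨wd, hwd, -⟩ := hrf_ex d hRd'
          rcases hc with hWc | hRc
          · have haw : addr c = addr wd := haddr'.trans (hrf_wf _ _ hwd).2.2.symm
            rcases hco_total c wd hWc (hrf_wf _ _ hwd).1 haw with h | h | h
            · exact Or.inl (Relation.TransGen.head ((hcom c wd).2 (Or.inl h))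
                (Relation.TransGen.single ((hcom wd d).2 (Or.inr (Or.inl hwd)))))
            · subst h
              exact Or.inl (Relation.TransGen.single ((hcom c d).2 (Or.inr (Or.inl hwd))))
            · exact absurd (Relation.TransGen.single ((hcom d c).2 (Or.inr (Or.inr ((hfr d c).2 ⟨wd, hwd, h⟩))))) (H c d hcd)
          · obtain ⟨wc, hwc, -⟩ := hrf_ex c hRc
            have haw : addr wc = addr wd :=
              ((hrf_wf _ _ hwc).2.2.trans haddr').trans (hrf_wf _ _ hwd).2.2.symm
            rcases hco_total wc wd (hrf_wf _ _ hwc).1 (hrf_wf _ _ hwd).1 haw with h | h | h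
            · exact Or.inl (Relation.TransGen.head
                ((hcom c wd).2 (Or.inr (Or.inr ((hfr c wd).2 ⟨wc, hwc, h⟩))))
                (Relation.TransGen.single ((hcom wd d).2 (Or.inr (Or.inl hwd)))))
            · subst h
              refine Or.inr fun v hv => ?_
              rcases (hcom d v).1 hv with h' | h' | h'
              · exact absurd ⟨(hco_wf _ _ h').1, hRd'⟩ (hdisj d)
              · exact absurd ⟨(hrf_wf _ _ h').1, hRd'⟩ (hdisj d)
              · obtain ⟨w', hw', hco'⟩ := (hfr d v).1 h'
                have := hrfu _ _ _ hw' hwd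
                subst this
                exact (hcom c v).2 (Or.inr (Or.inr ((hfr c v).2 ⟨w', hwc, hco'⟩)))
            · exact absurd (Relation.TransGen.head
                ((hcom d wc).2 (Or.inr (Or.inr ((hfr d wc).2 ⟨wd, hwd, h⟩))))
                (Relation.TransGen.single ((hcom wc c).2 (Or.inr (Or.inl hwc))))) (H c d hcd)
        · refine Or.inr fun v hv => ?_
          rcases (hcom d v).1 hv with h' | h' | h'
          · exact absurd (hco_wf _ _ h').1 hWd
          · exact absurd (hrf_wf _ _ h').1 hWd
          · obtain ⟨w', hw', -⟩ := (hfr d v).1 h'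
            exact absurd (hrf_wf _ _ hw').2.1 hRd'
    -- pol transitivity
    have hpol_trans : ∀ a b c, pol a b → pol b c → pol a c := by
      intro a b c h1 h2
      obtain ⟨p1, a1⟩ := (hpol a b).1 h1
      obtain ⟨p2, a2⟩ := (hpol b c).1 h2
      exact (hpol a c).2 ⟨hpo_trans _ _ _ p1 p2, a1.trans a2⟩
    -- main induction: normal form for union-paths from a memory event
    have P : ∀ b y, (W b ∨ Rd b) →
        Relation.TransGen (fun a b => pol a b ∨ com a b) b y →
        Relation.TransGen com b y ∨
          ∃ z, (b = z ∨ Relation.TransGen com b z) ∧ (W z ∨ Rd z) ∧ pol z y ∧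
            (∀ v, com y v → com z v) := by
      intro b y hb h
      induction h with
      | single h =>
        rcases h with h | h
        · rcases L b _ hb h with h' | h'
          · exact Or.inl h'
          · exact Or.inr ⟨b, Or.inl rfl, hb, h, h'⟩
        · exact Or.inl (Relation.TransGen.single h)
      | @tail y y' _ h ih =>
        rcases ih with ih | ⟨z, hbz, hz, hzy, hstk⟩
        · rcases h with h | h
          · have hy := hmemT _ _ ih
            rcases L y y' hy h with h' | h'
            · exact Or.inl (ih.trans h')
            · exact Or.inr ⟨y, Or.inr ih, hy, h, h'⟩
          · exact Or.inl (ih.tail h)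
        · rcases h with h | h
          · have hzy' := hpol_trans _ _ _ hzy h
            rcases L z y' hz hzy' with h' | h'
            · rcases hbz with rfl | hbz
              · exact Or.inl h'
              · exact Or.inl (hbz.trans h')
            · exact Or.inr ⟨z, hbz, hz, hzy', h'⟩
          · have hzy'' : com z y' := hstk y' h
            rcases hbz with rfl | hbz
            · exact Or.inl (Relation.TransGen.single hzy'')
            · exact Or.inl (hbz.tail hzy'')
    -- decomposition: cycle is all-pol or contains a com edge
    have decomp : ∀ a b, Relation.TransGen (fun a b => pol a b ∨ com a b) a b →
        Relation.TransGen pol a b ∨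
          ∃ u v, Relation.ReflTransGen (fun a b => pol a b ∨ com a b) a u ∧ com u v ∧
            Relation.ReflTransGen (fun a b => pol a b ∨ com a b) v b := by
      intro a b h
      induction h with
      | single h =>
        rcases h with h | h
        · exact Or.inl (Relation.TransGen.single h)
        · exact Or.inr ⟨a, _, Relation.ReflTransGen.refl, h, Relation.ReflTransGen.refl⟩
      | @tail y y' _ h ih =>
        rcases ih with ih | ⟨u, v, h1, h2, h3⟩
        · rcases h with h | h
          · exact Or.inl (ih.tail h)
          · exact Or.inr ⟨y, y', (Relation.TransGen.mono (p := fun a b => pol a b ∨ com a b) (fun a b h => Or.inl h) _ _ ih).to_reflTransGen, h,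
              Relation.ReflTransGen.refl⟩
        · exact Or.inr ⟨u, v, h1, h2, h3.tail h⟩
    rcases decomp x x hcyc with hpp | ⟨u, v, h1, h2, h3⟩
    · -- pure pol cycle
      have : pol x x := by
        have : ∀ a b, Relation.TransGen pol a b → pol a b := by
          intro a b h
          induction h with
          | single h => exact h
          | tail _ h ih => exact hpol_trans _ _ _ ih h
        exact this x x hpp
      exact hpo_irr x ((hpol x x).1 this).1
    · -- rotate cycle to start at v, a com target
      have hv : W v ∨ Rd v := hmem _ _ h2
      have cycv : Relation.TransGen (fun a b => pol a b ∨ com a b) v v :=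
        Relation.TransGen.tail' (h3.trans h1) (Or.inr h2)
      rcases P v v hv cycv with h' | ⟨z, hvz, hz, hzv, -⟩
      · exact hcomacyc v h'
      · rcases hvz with rfl | hvz
        · exact hpo_irr v ((hpol v v).1 hzv).1
        · exact H z v hzv hvz
end

section
/- (Five prohibited patterns.) An execution satisfies SC-Per-Location-2 (i.e., for all events x and y, pol x y implies ¬ com⁺ y x) if and only if there is no pair of events x, y with pol x y such that com y x, or (co;rf) y x, or (fr;rf) y x; equivalently, the execution contains none of the five patterns: pol;co, pol;rf, pol;fr, pol;(co;rf), and pol;(fr;rf) cycles of length two. -/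
theorem five_patterns {E A P : Type*} (W Rd : E → Prop) (addr : E → A) (proc : E → P)
    (po co rf fr com pol : E → E → Prop)
    (hdisj : ∀ e, ¬ (W e ∧ Rd e))
    (hpo_irr : ∀ x, ¬ po x x)
    (hpo_trans : ∀ x y z, po x y → po y z → po x z)
    (hpo_proc : ∀ x y, po x y → proc x = proc y)
    (hpo_total : ∀ x y, x ≠ y → proc x = proc y → po x y ∨ po y x)
    (hco_irr : ∀ x, ¬ co x x)
    (hco_trans : ∀ x y z, co x y → co y z → co x z)
    (hco_wf : ∀ x y, co x y → W x ∧ W y ∧ addr x = addr y)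
    (hco_total : ∀ x y, W x → W y → addr x = addr y → co x y ∨ x = y ∨ co y x)
    (hrf_wf : ∀ w r, rf w r → W w ∧ Rd r ∧ addr w = addr r)
    (hrf_ex : ∀ r, Rd r → ∃! w, rf w r)
    (hfr : ∀ r w, fr r w ↔ ∃ w', rf w' r ∧ co w' w)
    (hcom : ∀ x y, com x y ↔ co x y ∨ rf x y ∨ fr x y)
    (hpol : ∀ x y, pol x y ↔ po x y ∧ addr x = addr y) :
    (∀ x y, pol x y → ¬ Relation.TransGen com y x) ↔
      ¬ ∃ x y, pol x y ∧ (com y x ∨ (∃ p, co y p ∧ rf p x) ∨ (∃ p, fr y p ∧ rf p x)) := by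
  have hfrR : ∀ r w, fr r w → Rd r := by
    intro r w h
    obtain ⟨w', h1, _⟩ := (hfr r w).mp h
    exact (hrf_wf w' r h1).2.1
  have hfrW : ∀ r w, fr r w → W w := by
    intro r w h
    obtain ⟨w', _, h2⟩ := (hfr r w).mp h
    exact (hco_wf w' w h2).2.1
  -- rf;fr ⊆ co
  have hrffr : ∀ w r w2, rf w r → fr r w2 → co w w2 := by
    intro w r w2 h1 h2
    obtain ⟨w', hw1, hw2⟩ := (hfr r w2).mp h2
    obtain ⟨u, _, hu⟩ := hrf_ex r (hrf_wf w r h1).2.1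
    rw [hu w h1, ← hu w' hw1]
    exact hw2
  -- fr;co ⊆ fr
  have hfrco : ∀ r w w2, fr r w → co w w2 → fr r w2 := by
    intro r w w2 h1 h2
    obtain ⟨w', hw1, hw2⟩ := (hfr r w).mp h1
    exact (hfr r w2).mpr ⟨w', hw1, hco_trans _ _ _ hw2 h2⟩
  constructor
  · intro h
    rintro ⟨x, y, hxy, h1 | ⟨p, h1, h2⟩ | ⟨p, h1, h2⟩⟩
    · exact h x y hxy (.single h1)
    · exact h x y hxy (.tail (.single ((hcom y p).mpr (Or.inl h1)))
        ((hcom p x).mpr (Or.inr (Or.inl h2))))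
    · exact h x y hxy (.tail (.single ((hcom y p).mpr (Or.inr (Or.inr h1))))
        ((hcom p x).mpr (Or.inr (Or.inl h2))))
  · intro h x y hxy htg
    have key : ∀ a b, Relation.TransGen com a b →
        com a b ∨ (∃ p, co a p ∧ rf p b) ∨ (∃ p, fr a p ∧ rf p b) := by
      intro a b htg
      induction htg with
      | single h1 => exact Or.inl h1
      | @tail m c h1 h2 ih =>
        rcases ih with hc | ⟨p, hp1, hp2⟩ | ⟨p, hp1, hp2⟩
        · rcases (hcom a m).mp hc with ha | ha | ha <;>
            rcases (hcom m c).mp h2 with hb | hb | hb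
          · exact Or.inl ((hcom a c).mpr (Or.inl (hco_trans _ _ _ ha hb)))
          · exact Or.inr (Or.inl ⟨m, ha, hb⟩)
          · exact absurd ⟨(hco_wf a m ha).2.1, hfrR m c hb⟩ (hdisj m)
          · exact absurd ⟨(hco_wf m c hb).1, (hrf_wf a m ha).2.1⟩ (hdisj m)
          · exact absurd ⟨(hrf_wf m c hb).1, (hrf_wf a m ha).2.1⟩ (hdisj m)
          · exact Or.inl ((hcom a c).mpr (Or.inl (hrffr a m c ha hb)))
          · exact Or.inl ((hcom a c).mpr (Or.inr (Or.inr (hfrco a m c ha hb))))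
          · exact Or.inr (Or.inr ⟨m, ha, hb⟩)
          · exact absurd ⟨hfrW a m ha, hfrR m c hb⟩ (hdisj m)
        · -- co a p, rf p m
          rcases (hcom m c).mp h2 with hb | hb | hb
          · exact absurd ⟨(hco_wf m c hb).1, (hrf_wf p m hp2).2.1⟩ (hdisj m)
          · exact absurd ⟨(hrf_wf m c hb).1, (hrf_wf p m hp2).2.1⟩ (hdisj m)
          · exact Or.inl ((hcom a c).mpr (Or.inl (hco_trans _ _ _ hp1 (hrffr p m c hp2 hb))))
        · -- fr a p, rf p m
          rcases (hcom m c).mp h2 with hb | hb | hb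
          · exact absurd ⟨(hco_wf m c hb).1, (hrf_wf p m hp2).2.1⟩ (hdisj m)
          · exact absurd ⟨(hrf_wf m c hb).1, (hrf_wf p m hp2).2.1⟩ (hdisj m)
          · exact Or.inl ((hcom a c).mpr (Or.inr (Or.inr (hfrco a p c hp1 (hrffr p m c hp2 hb)))))
    exact h ⟨x, y, hxy, key y x htg⟩
end
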